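/- Let $X \sim \mathrm{Beta}(a, b)$ with $a, b > 0$ and mean $\mu = a/(a+b)$. Then for any $x \in (\mu, 1)$, $P(X > x) \le \exp\left[-(a+b)\left\{\mu \log\frac{\mu}{x} + (1-\mu)\log\frac{1-\mu}{1-x}\right\}\right]$. -/

import Mathlib

open MeasureTheory Set intervalIntegral

section
variable {a b : ℝ}


section
variable {a b : ℝ}

noncomputable def bF (a b : ℝ) (u : ℝ) : ℝ := ∫ t in u..1, t ^ (a-1) * (1-t) ^ (b-1)

lemma beta_intble {a b : ℝ} (ha : 0 < a) (hb : 0 < b) :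
    IntervalIntegrable (fun t => t ^ (a-1) * (1-t) ^ (b-1)) volume 0 1 := by
  have h1 : IntervalIntegrable (fun t => t ^ (a-1) * (1-t) ^ (b-1)) volume 0 (1/2) := by
    apply (intervalIntegral.intervalIntegrable_rpow' (by linarith : (-1:ℝ) < a-1)).mul_continuousOn
    apply ContinuousOn.rpow_const (by fun_prop)
    intro t ht
    rw [Set.uIcc_of_le (by norm_num)] at ht
    left; simp only [mem_Icc] at ht; intro h; linarith
  have h2 : IntervalIntegrable (fun t => t ^ (a-1) * (1-t) ^ (b-1)) volume (1/2) 1 := by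
    have h0 := ((intervalIntegral.intervalIntegrable_rpow' (by linarith : (-1:ℝ) < b-1)
      (a := 0) (b := 1/2)).comp_sub_left 1).symm
    have h2' : IntervalIntegrable (fun t => (1-t) ^ (b-1)) volume (1/2) 1 := by
      have e1 : (1:ℝ) - 1/2 = 1/2 := by norm_num
      have e2 : (1:ℝ) - 0 = 1 := by norm_num
      rw [e1, e2] at h0
      exact h0
    have h3 := h2'.mul_continuousOn (g := fun t => t ^ (a-1)) ?_
    · apply h3.congr
      exact fun t _ => mul_comm _ _
    · apply ContinuousOn.rpow_const (by fun_prop)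
      intro t ht
      rw [Set.uIcc_of_le (by norm_num)] at ht
      left; simp only [mem_Icc] at ht; intro h; linarith
  exact h1.trans h2

lemma beta_cont (ha : 0 < a) (hb : 0 < b) :
    ContinuousOn (fun t : ℝ => t ^ (a-1) * (1-t) ^ (b-1)) (Ioo 0 1) := by
  intro t ht
  apply ContinuousWithinAt.mul
  · exact ((Real.continuousAt_rpow_const t (a-1) (Or.inl ht.1.ne')).continuousWithinAt)
  · exact ((Real.continuousAt_rpow_const (1-t) (b-1)
      (Or.inl (by simp only [mem_Ioo] at ht; intro h; linarith : (1:ℝ)-t ≠ 0))).comp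
        (by fun_prop : Continuous fun t : ℝ => 1 - t).continuousAt).continuousWithinAt

lemma beta_intble' (ha : 0 < a) (hb : 0 < b) {y z : ℝ} (hy : 0 ≤ y) (hy1 : y ≤ 1)
    (hz : 0 ≤ z) (hz1 : z ≤ 1) :
    IntervalIntegrable (fun t => t ^ (a-1) * (1-t) ^ (b-1)) volume y z := by
  apply (beta_intble ha hb).mono_set
  exact Set.uIcc_subset_uIcc (by rw [Set.uIcc_of_le (by norm_num : (0:ℝ) ≤ 1)]; exact ⟨hy, hy1⟩)
    (by rw [Set.uIcc_of_le (by norm_num : (0:ℝ) ≤ 1)]; exact ⟨hz, hz1⟩)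

lemma bF_hasDeriv (ha : 0 < a) (hb : 0 < b) {y : ℝ} (hy : y ∈ Ioo 0 1) :
    HasDerivAt (bF a b) (-(y ^ (a-1) * (1-y) ^ (b-1))) y := by
  apply intervalIntegral.integral_hasDerivAt_left
  · exact beta_intble' ha hb hy.1.le hy.2.le zero_le_one le_rfl
  · exact (beta_cont ha hb).stronglyMeasurableAtFilter isOpen_Ioo y hy
  · exact (beta_cont ha hb).continuousAt (isOpen_Ioo.mem_nhds hy)

lemma bF_nonneg (ha : 0 < a) (hb : 0 < b) {y : ℝ} (h0 : 0 ≤ y) (h1 : y ≤ 1) : 0 ≤ bF a b y := by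
  apply intervalIntegral.integral_nonneg h1
  intro u hu
  simp only [mem_Icc] at hu
  exact mul_nonneg (Real.rpow_nonneg (by linarith) _) (Real.rpow_nonneg (by linarith) _)

lemma bF_contOn (ha : 0 < a) (hb : 0 < b) {y : ℝ} (hy : 0 < y) (hy1 : y ≤ 1) :
    ContinuousOn (bF a b) (Icc y 1) := by
  have hInt : IntegrableOn (fun t => t ^ (a-1) * (1-t) ^ (b-1)) (uIcc y 1) volume := by
    rw [Set.uIcc_of_le hy1, integrableOn_Icc_iff_integrableOn_Ioc]
    exact (intervalIntegrable_iff_integrableOn_Ioc_of_le hy1).mp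
      (beta_intble' ha hb hy.le hy1 zero_le_one le_rfl)
  have := intervalIntegral.continuousOn_primitive_interval (a := y) (b := 1) hInt
  have h2 : ContinuousOn (fun u => (∫ t in y..(1:ℝ), t ^ (a-1) * (1-t) ^ (b-1))
      - ∫ t in y..u, t ^ (a-1) * (1-t) ^ (b-1)) (Icc y 1) := by
    apply ContinuousOn.sub continuousOn_const
    rwa [Set.uIcc_of_le hy1] at this
  apply h2.congr
  intro u hu
  rw [bF]
  rw [eq_sub_iff_add_eq, add_comm, intervalIntegral.integral_add_adjacent_intervals]
  · exact beta_intble' ha hb hy.le hy1 (hy.le.trans hu.1) hu.2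
  · exact beta_intble' ha hb (hy.le.trans hu.1) hu.2 zero_le_one le_rfl
-- appended part, testing with sorried deps
lemma beta_val (ha : 0 < a) (hb : 0 < b) :
    ∫ t in (0:ℝ)..1, t ^ (a-1) * (1-t) ^ (b-1)
      = Real.Gamma a * Real.Gamma b / Real.Gamma (a+b) := by
  have key := Complex.Gamma_mul_Gamma_eq_betaIntegral
    (s := (a:ℂ)) (t := (b:ℂ)) (by simpa using ha) (by simpa using hb)
  have hint : Complex.betaIntegral a b
      = ((∫ t in (0:ℝ)..1, t ^ (a-1) * (1-t) ^ (b-1) : ℝ) : ℂ) := by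
    rw [Complex.betaIntegral, ← intervalIntegral.integral_ofReal]
    apply intervalIntegral.integral_congr
    intro t ht
    rw [Set.uIcc_of_le (by norm_num)] at ht
    simp only [mem_Icc] at ht
    simp only
    rw [Complex.ofReal_mul, Complex.ofReal_cpow ht.1,
      Complex.ofReal_cpow (by linarith : (0:ℝ) ≤ 1 - t)]
    push_cast
    ring
  rw [hint, ← Complex.ofReal_add, Complex.Gamma_ofReal, Complex.Gamma_ofReal,
    Complex.Gamma_ofReal, ← Complex.ofReal_mul, ← Complex.ofReal_mul] at key
  have := Complex.ofReal_injective key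
  have hG : Real.Gamma (a+b) ≠ 0 := (Real.Gamma_pos_of_pos (by linarith)).ne'
  field_simp [this]
  rw [this]; ring

lemma bD_hasDeriv (ha : 0 < a) (hb : 0 < b) {z : ℝ} (hz : z ∈ Ioo 0 1) :
    HasDerivAt (fun u : ℝ => u ^ a * (1-u) ^ b)
      (z ^ (a-1) * (1-z) ^ (b-1) * (a - (a+b)*z)) z := by
  obtain ⟨hz0, hz1⟩ := hz
  have h1 : HasDerivAt (fun u : ℝ => u ^ a) (a * z ^ (a-1)) z :=
    Real.hasDerivAt_rpow_const (Or.inl hz0.ne')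
  have h2 : HasDerivAt (fun u : ℝ => (1-u) ^ b) (b * (1-z) ^ (b-1) * (-1)) z := by
    exact (Real.hasDerivAt_rpow_const (p := b)
      (Or.inl (by intro h; linarith : (1:ℝ)-z ≠ 0))).comp z
      (by simpa using (hasDerivAt_id z).const_sub 1)
  have h3 := h1.mul h2
  refine h3.congr_deriv ?_
  have e1 : z ^ a = z ^ (a-1) * z := by
    rw [← Real.rpow_add_one hz0.ne']; ring_nf
  have e2 : (1-z) ^ b = (1-z) ^ (b-1) * (1-z) := by
    rw [← Real.rpow_add_one (by intro h; linarith : (1:ℝ)-z ≠ 0)]; ring_nf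
  rw [e1, e2]; ring

lemma psi_nonpos (ha : 0 < a) (hb : 0 < b) {y : ℝ} (hy : 0 < y) (hy1 : y ≤ 1) :
    ((a+b)*y - a) * bF a b y ≤ y ^ a * (1-y) ^ b := by
  set ψ : ℝ → ℝ := fun u => ((a+b)*u - a) * bF a b u - u ^ a * (1-u) ^ b with hψ
  have hderiv : ∀ z ∈ Ioo y 1, HasDerivAt ψ ((a+b) * bF a b z) z := by
    intro z hz
    have hz' : z ∈ Ioo 0 1 := ⟨hy.trans hz.1, hz.2⟩
    have h1 : HasDerivAt (fun u : ℝ => ((a+b)*u - a) * bF a b u)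
        ((a+b) * bF a b z + ((a+b)*z - a) * -(z ^ (a-1) * (1-z) ^ (b-1))) z := by
      have := (((hasDerivAt_id z).const_mul (a+b)).sub_const a).mul (bF_hasDeriv ha hb hz')
      simp only [id] at this
      refine this.congr_deriv ?_
      ring
    have := h1.sub (bD_hasDeriv ha hb hz')
    refine this.congr_deriv ?_
    ring
  have hcont : ContinuousOn ψ (Icc y 1) := by
    apply ContinuousOn.sub
    · exact (ContinuousOn.sub (continuousOn_const.mul continuousOn_id) continuousOn_const).mul
        (bF_contOn ha hb hy hy1)
    · apply ContinuousOn.mul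
      · exact ContinuousOn.rpow_const continuousOn_id
          (fun t ht => Or.inl (by intro h; rw [h] at ht; exact absurd ht.1 (by linarith)))
      · exact ContinuousOn.rpow_const (continuousOn_const.sub continuousOn_id)
          (fun t ht => Or.inr hb.le)
  have hmono : MonotoneOn ψ (Icc y 1) := by
    apply monotoneOn_of_deriv_nonneg (convex_Icc y 1) hcont
    · rw [interior_Icc]
      intro z hz
      exact (hderiv z hz).differentiableAt.differentiableWithinAt
    · rw [interior_Icc]
      intro z hz
      rw [(hderiv z hz).deriv]
      have : 0 ≤ bF a b z := bF_nonneg ha hb (hy.trans hz.1).le hz.2.le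
      positivity
  have h10 : ψ 1 = 0 := by
    simp [hψ, bF, intervalIntegral.integral_same, Real.zero_rpow hb.ne', Real.one_rpow]
  have := hmono (Set.mem_Icc.mpr ⟨le_rfl, hy1⟩) (Set.mem_Icc.mpr ⟨hy1, le_rfl⟩) hy1
  rw [h10] at this
  simpa [hψ, sub_nonpos] using this
lemma ratio_le (ha : 0 < a) (hb : 0 < b) {m x : ℝ} (hm0 : 0 < m) (hmx : m ≤ x)
    (hx1 : x < 1) :
    bF a b x * (m ^ a * (1-m) ^ b) ≤ bF a b m * (x ^ a * (1-x) ^ b) := by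
  set D : ℝ → ℝ := fun u => u ^ a * (1-u) ^ b with hD
  have hDpos : ∀ z ∈ Icc m x, 0 < D z := by
    intro z hz
    have : 0 < z := lt_of_lt_of_le hm0 hz.1
    have : z < 1 := lt_of_le_of_lt hz.2 hx1
    apply mul_pos (Real.rpow_pos_of_pos (by linarith) _) (Real.rpow_pos_of_pos (by linarith) _)
  set V : ℝ → ℝ := fun u => bF a b u / D u with hV
  have hderiv : ∀ z ∈ Ioo m x, HasDerivAt V
      ((-(z ^ (a-1) * (1-z) ^ (b-1)) * D z - bF a b z *
        (z ^ (a-1) * (1-z) ^ (b-1) * (a - (a+b)*z))) / (D z)^2) z := by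
    intro z hz
    have hz' : z ∈ Ioo 0 1 := ⟨hm0.trans hz.1, hz.2.trans hx1⟩
    exact (bF_hasDeriv ha hb hz').div (bD_hasDeriv ha hb hz')
      (hDpos z ⟨hz.1.le, hz.2.le⟩).ne'
  have hanti : AntitoneOn V (Icc m x) := by
    apply antitoneOn_of_deriv_nonpos (convex_Icc m x)
    · apply ContinuousOn.div
      · exact (bF_contOn ha hb hm0 (hmx.trans hx1.le)).mono
          (Icc_subset_Icc le_rfl hx1.le)
      · apply ContinuousOn.mul
        · exact ContinuousOn.rpow_const continuousOn_id
            (fun t ht => Or.inl (by intro h; rw [h] at ht; exact absurd ht.1 (by linarith)))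
        · exact ContinuousOn.rpow_const (continuousOn_const.sub continuousOn_id)
            (fun t ht => Or.inr hb.le)
      · exact fun z hz => (hDpos z hz).ne'
    · rw [interior_Icc]
      exact fun z hz => (hderiv z hz).differentiableAt.differentiableWithinAt
    · rw [interior_Icc]
      intro z hz
      rw [(hderiv z hz).deriv]
      apply div_nonpos_of_nonpos_of_nonneg _ (sq_nonneg _)
      have hz' : z ∈ Ioo 0 1 := ⟨hm0.trans hz.1, hz.2.trans hx1⟩
      have hf : 0 ≤ z ^ (a-1) * (1-z) ^ (b-1) :=
        mul_nonneg (Real.rpow_nonneg hz'.1.le _) (Real.rpow_nonneg (by linarith [hz'.2]) _)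
      have hpsi := psi_nonpos ha hb hz'.1 hz'.2.le
      have hDz : D z = z ^ a * (1-z) ^ b := rfl
      rw [hDz]
      nlinarith [mul_nonneg hf (by linarith : 0 ≤ z ^ a * (1-z) ^ b - ((a+b)*z - a) * bF a b z)]
  have := hanti (Set.mem_Icc.mpr ⟨le_rfl, hmx⟩) (Set.mem_Icc.mpr ⟨hmx, le_rfl⟩) hmx
  rw [hV] at this
  have hm' := hDpos m (Set.mem_Icc.mpr ⟨le_rfl, hmx⟩)
  have hx' := hDpos x (Set.mem_Icc.mpr ⟨hmx, le_rfl⟩)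
  rw [div_le_div_iff₀ hx' hm'] at this
  exact this
end


end

/-- The Beta(a, b) probability measure on ℝ, given by its density
`Γ(a+b)/(Γ(a)Γ(b)) x^(a-1) (1-x)^(b-1)` on `(0,1)` with respect to Lebesgue measure. -/
noncomputable def betaMeasure (a b : ℝ) : Measure ℝ :=
  volume.withDensity fun x =>
    ENNReal.ofReal
      (if x ∈ Set.Ioo (0 : ℝ) 1 then
        (Real.Gamma (a + b) / (Real.Gamma a * Real.Gamma b)) *
          x ^ (a - 1) * (1 - x) ^ (b - 1)
      else 0)

theorem stmt_5 (a b : ℝ) (ha : 0 < a) (hb : 0 < b) (x : ℝ)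
    (hx1 : a / (a + b) < x) (hx2 : x < 1) :
    betaMeasure a b {y : ℝ | x < y}
      ≤ ENNReal.ofReal
          (Real.exp (-((a + b) *
            ((a / (a + b)) * Real.log ((a / (a + b)) / x) +
              (1 - a / (a + b)) * Real.log ((1 - a / (a + b)) / (1 - x)))))) := by
  have hr : 0 < a + b := by linarith
  set m := a / (a + b) with hm
  have hm0 : 0 < m := div_pos ha hr
  have hm1 : m < 1 := by rw [hm, div_lt_one hr]; linarith
  have hx0 : 0 < x := hm0.trans hx1
  set C := Real.Gamma (a + b) / (Real.Gamma a * Real.Gamma b) with hC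
  have hGa := Real.Gamma_pos_of_pos ha
  have hGb := Real.Gamma_pos_of_pos hb
  have hGr := Real.Gamma_pos_of_pos hr
  have hCpos : 0 < C := div_pos hGr (mul_pos hGa hGb)
  -- Step 1: measure as real integral
  have hmeas : betaMeasure a b {y : ℝ | x < y} = ENNReal.ofReal (C * bF a b x) := by
    have hset : {y : ℝ | x < y} = Set.Ioi x := rfl
    rw [hset, betaMeasure, withDensity_apply _ measurableSet_Ioi,
      ← Set.Ioo_union_Ici_eq_Ioi hx2,
      lintegral_union measurableSet_Ici (by
        refine Set.disjoint_left.mpr fun y hy hy2 => ?_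
        exact absurd hy.2 (not_lt.mpr hy2))]
    have h2 : ∫⁻ y in Set.Ici (1:ℝ), ENNReal.ofReal
        (if y ∈ Set.Ioo (0 : ℝ) 1 then C * y ^ (a - 1) * (1 - y) ^ (b - 1) else 0) = 0 := by
      have hz : ∀ y ∈ Set.Ici (1:ℝ), ENNReal.ofReal
          (if y ∈ Set.Ioo (0 : ℝ) 1 then C * y ^ (a - 1) * (1 - y) ^ (b - 1) else 0)
            = 0 := by
        intro y hy
        have hy' : y ∉ Set.Ioo (0:ℝ) 1 := fun h => absurd h.2 (not_lt.mpr hy)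
        simp [hy']
      rw [setLIntegral_congr_fun measurableSet_Ici hz, lintegral_zero]
    rw [h2, add_zero]
    rw [setLIntegral_congr_fun measurableSet_Ioo (μ := volume)
      (f := fun y => ENNReal.ofReal
        (if y ∈ Set.Ioo (0 : ℝ) 1 then C * y ^ (a - 1) * (1 - y) ^ (b - 1) else 0))
      (g := fun y => ENNReal.ofReal (C * (y ^ (a - 1) * (1 - y) ^ (b - 1))))
      (fun y hy => by
        have hy' : y ∈ Set.Ioo (0:ℝ) 1 := ⟨hx0.trans hy.1, hy.2⟩
        simp only [hy', if_true]; ring_nf)]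
    have hInt : IntegrableOn (fun y : ℝ => C * (y ^ (a - 1) * (1 - y) ^ (b - 1)))
        (Set.Ioo x 1) volume := by
      apply MeasureTheory.Integrable.const_mul
      apply IntegrableOn.mono_set _ Set.Ioo_subset_Ioc_self
      exact (intervalIntegrable_iff_integrableOn_Ioc_of_le hx2.le).mp
        (beta_intble' ha hb hx0.le hx2.le zero_le_one le_rfl)
    rw [← MeasureTheory.ofReal_integral_eq_lintegral_ofReal hInt
      (ae_restrict_of_forall_mem measurableSet_Ioo fun y hy => by
        have h1 : (0:ℝ) ≤ y := (hx0.trans hy.1).le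
        have h2 : (0:ℝ) ≤ 1 - y := by linarith [hy.2]
        positivity)]
    congr 1
    rw [← MeasureTheory.integral_Ioc_eq_integral_Ioo,
      ← intervalIntegral.integral_of_le hx2.le, intervalIntegral.integral_const_mul, bF]
  rw [hmeas]
  apply ENNReal.ofReal_le_ofReal
  -- Step 2: bF m ≤ B
  have hB : bF a b m ≤ Real.Gamma a * Real.Gamma b / Real.Gamma (a+b) := by
    rw [← beta_val ha hb,
      ← intervalIntegral.integral_add_adjacent_intervals (b := m)
        (beta_intble' ha hb le_rfl zero_le_one hm0.le hm1.le)
        (beta_intble' ha hb hm0.le hm1.le zero_le_one le_rfl)]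
    have h0 : 0 ≤ ∫ t in (0:ℝ)..m, t ^ (a-1) * (1-t) ^ (b-1) := by
      apply intervalIntegral.integral_nonneg hm0.le
      intro u hu
      have h1 : (0:ℝ) ≤ u := hu.1
      have h2 : (0:ℝ) ≤ 1 - u := by linarith [hu.2, hm1]
      positivity
    rw [bF]
    linarith
  -- Step 3: ratio
  have hratio := ratio_le ha hb hm0 hx1.le hx2
  set Dx := x ^ a * (1-x) ^ b with hDx
  set Dm := m ^ a * (1-m) ^ b with hDm
  have hDxpos : 0 < Dx := mul_pos (Real.rpow_pos_of_pos hx0 _)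
    (Real.rpow_pos_of_pos (by linarith) _)
  have hDmpos : 0 < Dm := mul_pos (Real.rpow_pos_of_pos hm0 _)
    (Real.rpow_pos_of_pos (by linarith) _)
  have hkey : C * bF a b x ≤ Dx / Dm := by
    rw [le_div_iff₀ hDmpos]
    have h1 : bF a b x * Dm ≤ (Real.Gamma a * Real.Gamma b / Real.Gamma (a+b)) * Dx := by
      calc bF a b x * Dm ≤ bF a b m * Dx := hratio
        _ ≤ (Real.Gamma a * Real.Gamma b / Real.Gamma (a+b)) * Dx :=
          mul_le_mul_of_nonneg_right hB hDxpos.le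
    calc C * bF a b x * Dm = C * (bF a b x * Dm) := by ring
      _ ≤ C * ((Real.Gamma a * Real.Gamma b / Real.Gamma (a+b)) * Dx) :=
          mul_le_mul_of_nonneg_left h1 hCpos.le
      _ = Dx := by rw [hC]; field_simp
  -- Step 4: exponent identity
  have hexp : Real.exp (-((a + b) *
      (m * Real.log (m / x) + (1 - m) * Real.log ((1 - m) / (1 - x))))) = Dx / Dm := by
    have e1 : Real.log (m / x) = Real.log m - Real.log x := Real.log_div hm0.ne' hx0.ne'
    have e2 : Real.log ((1-m) / (1-x)) = Real.log (1-m) - Real.log (1-x) :=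
      Real.log_div (by linarith) (by linarith)
    have hma : (a+b) * m = a := by rw [hm]; field_simp
    have hmb : (a+b) * (1-m) = b := by rw [hm]; field_simp; ring
    have e3 : -((a + b) * (m * Real.log (m / x) + (1 - m) * Real.log ((1 - m) / (1 - x))))
        = (Real.log x * a + Real.log (1-x) * b) - (Real.log m * a + Real.log (1-m) * b) := by
      rw [e1, e2]
      linear_combination (-Real.log m + Real.log x) * hma
        + (-Real.log (1-m) + Real.log (1-x)) * hmb
    rw [e3, Real.exp_sub, Real.exp_add, Real.exp_add,
      ← Real.rpow_def_of_pos hx0, ← Real.rpow_def_of_pos (by linarith : (0:ℝ) < 1-x),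
      ← Real.rpow_def_of_pos hm0, ← Real.rpow_def_of_pos (by linarith : (0:ℝ) < 1-m)]
  rw [hexp]
  exact hkey
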